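/- arXiv:2411.16062 — 3 statements merged into one kernel-verified Lean document; each statement's English description precedes it below -/
import Mathlib

section
/- The limit C = lim_{k→∞} x_k / p^k exists, is strictly positive, and equals x_0 · ∏_{j=0}^∞ (1 − x_j), where the infinite product converges to a nonzero value. -/
/-- For the logistic recurrence with `0 < p < 1` and `x_0 ∈ (0,1)`,
the limit `C = lim x_k / p^k` exists, is strictly positive, and equals
`x_0 * ∏_{j=0}^∞ (1 - x_j)`, the infinite product converging to a nonzero value. -/
theorem stmt4 (p : ℝ) (hp0 : 0 < p) (hp1 : p < 1)
    (x : ℕ → ℝ) (hx0 : 0 < x 0) (hx1 : x 0 < 1)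
    (hrec : ∀ k : ℕ, x (k + 1) = p * x k * (1 - x k)) :
    ∃ C : ℝ, 0 < C ∧
      Filter.Tendsto (fun k : ℕ => x k / p ^ k) Filter.atTop (nhds C) ∧
      Multipliable (fun j : ℕ => 1 - x j) ∧
      (∏' j : ℕ, (1 - x j)) ≠ 0 ∧
      C = x 0 * ∏' j : ℕ, (1 - x j) := by
  -- all terms are in (0,1)
  have h01 : ∀ k, 0 < x k ∧ x k < 1 := by
    intro k
    induction k with
    | zero => exact ⟨hx0, hx1⟩
    | succ n ih =>
      rw [hrec n]
      constructor
      · exact mul_pos (mul_pos hp0 ih.1) (by linarith [ih.2])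
      · nlinarith [sq_nonneg (x n - 1/2), ih.1, ih.2]
  set c : ℝ := min (1 - x 0) (1/2) with hc
  have hcpos : 0 < c := lt_min (by linarith) (by norm_num)
  have hclee : ∀ j, c ≤ 1 - x j := by
    intro j
    cases j with
    | zero => exact min_le_left _ _
    | succ n =>
      have h1 := (h01 n).1
      have h2 := (h01 n).2
      have : x (n + 1) ≤ 1/2 := by
        rw [hrec n]; nlinarith [sq_nonneg (x n - 1/2)]
      calc c ≤ 1/2 := min_le_right _ _
        _ ≤ 1 - x (n+1) := by linarith
  have hgeo : ∀ k, x k ≤ x 0 * p ^ k := by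
    intro k
    induction k with
    | zero => simp
    | succ n ih =>
      rw [hrec n, pow_succ]
      have h1 := (h01 n).1
      have h2 := (h01 n).2
      calc p * x n * (1 - x n) ≤ p * x n * 1 := by nlinarith [mul_pos (mul_pos hp0 h1) h1]
        _ = p * x n := by ring
        _ ≤ p * (x 0 * p ^ n) := by nlinarith [pow_pos hp0 n]
        _ = x 0 * (p ^ n * p) := by ring
  have hsumx : Summable x := by
    refine Summable.of_nonneg_of_le (fun k => (h01 k).1.le) hgeo ?_
    exact (summable_geometric_of_lt_one hp0.le hp1).mul_left (x 0)
  -- summability of logs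
  have hlogle : ∀ j, -Real.log (1 - x j) ≤ c⁻¹ * x j := by
    intro j
    have hc' := hclee j
    have hpos : 0 < 1 - x j := lt_of_lt_of_le hcpos hc'
    have := Real.log_le_sub_one_of_pos (show (0:ℝ) < (1 - x j)⁻¹ by positivity)
    rw [← Real.log_inv]
    have h1 : (1 - x j)⁻¹ - 1 = x j / (1 - x j) := by field_simp; ring
    have h2 : x j / (1 - x j) ≤ x j / c := by
      apply div_le_div_of_nonneg_left (h01 j).1.le hcpos hc'
    rw [h1] at this
    calc Real.log (1 - x j)⁻¹ ≤ x j / (1 - x j) := this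
      _ ≤ x j / c := h2
      _ = c⁻¹ * x j := by rw [div_eq_inv_mul]
  have hlogsum : Summable (fun j => Real.log (1 - x j)) := by
    rw [← summable_neg_iff]
    refine Summable.of_nonneg_of_le (fun j => ?_) hlogle (hsumx.mul_left c⁻¹)
    have hpos : 0 < 1 - x j := lt_of_lt_of_le hcpos (hclee j)
    have hle : (1 : ℝ) - x j ≤ 1 := by linarith [(h01 j).1]
    simpa using Real.log_nonpos hpos.le hle
  set S : ℝ := ∑' j, Real.log (1 - x j) with hS
  have hprod : HasProd (fun j : ℕ => 1 - x j) (Real.exp S) := by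
    have h := hlogsum.hasSum.rexp
    have hfun : (Real.exp ∘ fun j => Real.log (1 - x j)) = fun j : ℕ => 1 - x j := by
      funext j
      exact Real.exp_log (lt_of_lt_of_le hcpos (hclee j))
    rwa [hfun] at h
  have hmul : Multipliable (fun j : ℕ => 1 - x j) := ⟨_, hprod⟩
  have htprod : (∏' j : ℕ, (1 - x j)) = Real.exp S := hprod.tprod_eq
  -- partial products identity
  have hpart : ∀ k, x k / p ^ k = x 0 * ∏ j ∈ Finset.range k, (1 - x j) := by
    intro k
    induction k with
    | zero => simp
    | succ n ih =>
      rw [Finset.prod_range_succ, hrec n, pow_succ, ← mul_assoc, ← ih]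
      have hpn : (p : ℝ) ^ n ≠ 0 := by positivity
      field_simp
  refine ⟨x 0 * Real.exp S, by positivity, ?_, hmul, by rw [htprod]; positivity, by rw [htprod]⟩
  have := (hprod.tendsto_prod_nat).const_mul (x 0)
  refine this.congr (fun k => ?_)
  exact (hpart k).symm
end

section
/- The series ∑_{j=0}^∞ x_j converges, and the limit C = lim_{k→∞} x_k / p^k exists, is strictly positive, and equals x_0 · ∏_{j=0}^∞ (1 + x_j), where the infinite product converges to a finite nonzero value. -/
open Filter Finset

/-- For the recurrence `x_k = p * x_{k-1} * (1 + x_{k-1})` with `0 < p < 1`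
and `x_0 ∈ (0, (1-p)/p)`, the series `∑ x_j` converges and the limit
`C = lim x_k / p^k` exists, is strictly positive, and equals
`x_0 * ∏_{j=0}^∞ (1 + x_j)`, the infinite product converging to a finite
nonzero value. -/
theorem stmt11 (p : ℝ) (hp0 : 0 < p) (hp1 : p < 1)
    (x : ℕ → ℝ) (hx0 : 0 < x 0) (hx0' : x 0 < (1 - p) / p)
    (hrec : ∀ k : ℕ, x (k + 1) = p * x k * (1 + x k)) :
    Summable x ∧
    ∃ C : ℝ, 0 < C ∧
      Filter.Tendsto (fun k : ℕ => x k / p ^ k) Filter.atTop (nhds C) ∧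
      Multipliable (fun j : ℕ => 1 + x j) ∧
      (∏' j : ℕ, (1 + x j)) ≠ 0 ∧
      C = x 0 * ∏' j : ℕ, (1 + x j) := by
  set q : ℝ := p * (1 + x 0) with hq
  have hq1 : q < 1 := by
    have : x 0 * p < 1 - p := (lt_div_iff₀ hp0).mp hx0'
    nlinarith
  have hq0 : 0 < q := by nlinarith
  -- positivity and geometric bound
  have key : ∀ k, 0 < x k ∧ x k ≤ x 0 * q ^ k := by
    intro k
    induction k with
    | zero => simpa using hx0
    | succ n ih =>
      obtain ⟨h1, h2⟩ := ih
      have hxn : x n ≤ x 0 := by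
        have : q ^ n ≤ 1 := pow_le_one₀ hq0.le hq1.le
        nlinarith
      constructor
      · rw [hrec n]; positivity
      · rw [hrec n, pow_succ]
        nlinarith [mul_nonneg (mul_nonneg hp0.le h1.le) (sub_nonneg.mpr hxn),
          mul_nonneg hq0.le (sub_nonneg.mpr h2)]
  have hpos : ∀ k, 0 < x k := fun k => (key k).1
  -- summable
  have hsum : Summable x := by
    apply Summable.of_nonneg_of_le (fun k => (hpos k).le) (fun k => (key k).2)
    exact (summable_geometric_of_lt_one hq0.le hq1).mul_left (x 0)
  refine ⟨hsum, ?_⟩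
  set f : ℕ → ℝ := fun j => 1 + x j with hf
  have hf1 : ∀ j, (1:ℝ) ≤ f j := fun j => by simp [hf]; exact (hpos j).le
  have hone : ∀ s : Finset ℕ, (1:ℝ) ≤ ∏ j ∈ s, f j := by
    intro s
    calc (1:ℝ) = ∏ _j ∈ s, (1:ℝ) := by simp
      _ ≤ ∏ j ∈ s, f j := Finset.prod_le_prod (by simp) (fun i _ => hf1 i)
  -- partial products bounded
  have hbdd : ∀ s : Finset ℕ, ∏ j ∈ s, f j ≤ Real.exp (∑' j, x j) := by
    intro s
    calc ∏ j ∈ s, f j ≤ ∏ j ∈ s, Real.exp (x j) := by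
          apply Finset.prod_le_prod (fun j _ => by linarith [hf1 j])
          intro j _
          simpa [hf, add_comm] using Real.add_one_le_exp (x j)
      _ = Real.exp (∑ j ∈ s, x j) := by rw [Real.exp_sum]
      _ ≤ Real.exp (∑' j, x j) := by
          apply Real.exp_le_exp.mpr
          exact Summable.sum_le_tsum s (fun j _ => (hpos j).le) hsum
  have hmono : Monotone (fun s : Finset ℕ => ∏ j ∈ s, f j) := by
    intro s t hst
    have h0 : (0:ℝ) ≤ ∏ j ∈ s, f j := Finset.prod_nonneg fun i _ => by linarith [hf1 i]
    calc ∏ j ∈ s, f j ≤ (∏ j ∈ t \ s, f j) * ∏ j ∈ s, f j :=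
          le_mul_of_one_le_left h0 (hone _)
      _ = ∏ j ∈ t, f j := Finset.prod_sdiff hst
  have hbdd' : BddAbove (Set.range fun s : Finset ℕ => ∏ j ∈ s, f j) := by
    refine ⟨Real.exp (∑' j, x j), ?_⟩
    rintro _ ⟨s, rfl⟩
    exact hbdd s
  have hHP : HasProd f (⨆ s : Finset ℕ, ∏ j ∈ s, f j) :=
    tendsto_atTop_ciSup hmono hbdd'
  have hmul : Multipliable f := ⟨_, hHP⟩
  have hHP' : HasProd f (∏' j, f j) := hmul.hasProd
  have htp1 : (1:ℝ) ≤ ∏' j, f j := by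
    apply ge_of_tendsto hHP'
    filter_upwards with s
    exact hone s
  -- identity x k / p^k = x 0 * ∏_{j<k} f j
  have hid : ∀ k, x k / p ^ k = x 0 * ∏ j ∈ Finset.range k, f j := by
    intro k
    induction k with
    | zero => simp
    | succ n ih =>
      rw [hrec n, Finset.prod_range_succ, pow_succ]
      have hpn : (p:ℝ) ^ n ≠ 0 := by positivity
      calc p * x n * (1 + x n) / (p ^ n * p) = (x n / p ^ n) * (1 + x n) := by
            field_simp
        _ = x 0 * ((∏ j ∈ Finset.range n, f j) * f n) := by
            rw [ih]; simp only [hf]; ring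
  refine ⟨x 0 * ∏' j, f j, by nlinarith, ?_, hmul, by nlinarith, rfl⟩
  have := (hHP'.tendsto_prod_nat).const_mul (x 0)
  convert this using 2 with k
  exact hid k
end

section
/- The sequence x_k converges to 0 as k → ∞. -/
/-- For the recurrence `x_k = p * x_{k-1} * (1 + x_{k-1})` with `0 < p < 1`
and `x_0 ∈ (0, (1-p)/p)`, the sequence `x_k` converges to `0`. -/
theorem stmt12 (p : ℝ) (hp0 : 0 < p) (hp1 : p < 1)
    (x : ℕ → ℝ) (hx0 : 0 < x 0) (hx0' : x 0 < (1 - p) / p)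
    (hrec : ∀ k : ℕ, x (k + 1) = p * x k * (1 + x k)) :
    Filter.Tendsto x Filter.atTop (nhds 0) := by
  set r : ℝ := p * (1 + x 0) with hr
  have hr0 : 0 < r := by positivity
  have hr1 : r < 1 := by
    have : p * x 0 < 1 - p := by
      have := (lt_div_iff₀ hp0).mp hx0'
      linarith [this]
    simp only [hr]; nlinarith
  have key : ∀ k, 0 < x k ∧ x k ≤ r ^ k * x 0 := by
    intro k
    induction k with
    | zero => exact ⟨hx0, by simp⟩
    | succ n ih =>
      obtain ⟨hpos, hle⟩ := ih
      have hrk1 : r ^ n ≤ 1 := pow_le_one₀ hr0.le hr1.le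
      have hxn0 : x n ≤ x 0 := le_trans hle (by nlinarith)
      constructor
      · rw [hrec n]; positivity
      · rw [hrec n]
        have : p * x n * (1 + x n) ≤ p * (1 + x 0) * x n := by nlinarith [mul_pos hp0 hpos]
        calc p * x n * (1 + x n) ≤ r * x n := this
          _ ≤ r * (r ^ n * x 0) := by nlinarith
          _ = r ^ (n + 1) * x 0 := by ring
  have htend : Filter.Tendsto (fun k => r ^ k * x 0) Filter.atTop (nhds 0) := by
    have := (tendsto_pow_atTop_nhds_zero_of_lt_one hr0.le hr1).mul_const (x 0)
    simpa using this
  exact squeeze_zero (fun k => (key k).1.le) (fun k => (key k).2) htend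
end
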